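/- In a backward search step, let BWT[s..e] be a nonempty interval and c a character. If BWT[s..e] contains at least one occurrence of c, let s* = min{j ∈ [s,e] : BWT[j] = c} and e* = max{j ∈ [s,e] : BWT[j] = c}. Then {LF(j) : j ∈ [s,e], BWT[j] = c} = [LF(s*), LF(e*)], i.e., the LF-images of the c-positions in the interval form a contiguous interval. -/
import Mathlib


def finPred {n : ℕ} (i : Fin n) : Fin n :=
  ⟨i.val - 1, Nat.lt_of_le_of_lt (Nat.sub_le _ _) i.isLt⟩

/-- C(c) = number of positions j with BWT[j] < c. -/
def Ccount {n : ℕ} {α : Type*} [LinearOrder α] (B : Fin n → α) (c : α) : ℕ :=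
  (Finset.univ.filter (fun j => B j < c)).card

/-- rank_c(B, i) = number of positions j < i with B[j] = c. -/
def rank {n : ℕ} {α : Type*} [LinearOrder α] (B : Fin n → α) (c : α) (i : Fin n) : ℕ :=
  (Finset.univ.filter (fun j => j < i ∧ B j = c)).card

/-- LF(i) = C(BWT[i]) + rank_{BWT[i]}(BWT, i). -/
def LF {n : ℕ} {α : Type*} [LinearOrder α] (B : Fin n → α) (i : Fin n) : ℕ :=
  Ccount B (B i) + rank B (B i) i

/-- Run heads: positions i with i = 0 or B[i] ≠ B[i−1]. -/
def runHeads {n : ℕ} {α : Type*} [LinearOrder α] (B : Fin n → α) : Finset (Fin n) :=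
  Finset.univ.filter (fun i => i.val = 0 ∨ B i ≠ B (finPred i))

lemma rank_mono' {n : ℕ} {α : Type*} [LinearOrder α] (B : Fin n → α) (c : α)
    {i i' : Fin n} (h : i ≤ i') : rank B c i ≤ rank B c i' := by
  apply Finset.card_le_card
  intro j hj
  simp only [Finset.mem_filter, Finset.mem_univ, true_and] at *
  exact ⟨lt_of_lt_of_le hj.1 h, hj.2⟩

lemma rank_strict' {n : ℕ} {α : Type*} [LinearOrder α] (B : Fin n → α) (c : α)
    {i i' : Fin n} (h : i < i') (hc : B i = c) : rank B c i < rank B c i' := by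
  apply Finset.card_lt_card
  constructor
  · intro j hj
    simp only [Finset.mem_filter, Finset.mem_univ, true_and] at *
    exact ⟨lt_trans hj.1 h, hj.2⟩
  · intro hsub
    have : i ∈ Finset.univ.filter (fun j => j < i ∧ B j = c) := by
      apply hsub; simp [h, hc]
    simp at this

lemma rank_lt_card' {n : ℕ} {α : Type*} [LinearOrder α] (B : Fin n → α) (c : α)
    {i : Fin n} (hc : B i = c) :
    rank B c i < (Finset.univ.filter (fun j => B j = c)).card := by
  apply Finset.card_lt_card
  constructor
  · intro j hj
    simp only [Finset.mem_filter, Finset.mem_univ, true_and] at *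
    exact hj.2
  · intro hsub
    have : i ∈ Finset.univ.filter (fun j => j < i ∧ B j = c) := by
      apply hsub; simp [hc]
    simp at this

lemma rank_injOn' {n : ℕ} {α : Type*} [LinearOrder α] (B : Fin n → α) (c : α) :
    Set.InjOn (rank B c) ↑(Finset.univ.filter (fun j => B j = c)) := by
  intro j hj j' hj' hr
  simp only [Finset.coe_filter, Set.mem_setOf_eq] at hj hj'
  rcases lt_trichotomy j j' with h | h | h
  · exact absurd hr (Nat.ne_of_lt (rank_strict' B c h hj.2))
  · exact h
  · exact absurd hr.symm (Nat.ne_of_lt (rank_strict' B c h hj'.2))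

lemma rank_image' {n : ℕ} {α : Type*} [LinearOrder α] (B : Fin n → α) (c : α) :
    (Finset.univ.filter (fun j => B j = c)).image (rank B c) =
      Finset.range (Finset.univ.filter (fun j => B j = c)).card := by
  apply Finset.eq_of_subset_of_card_le
  · intro k hk
    simp only [Finset.mem_image, Finset.mem_filter, Finset.mem_univ, true_and] at hk
    obtain ⟨j, hj, rfl⟩ := hk
    exact Finset.mem_range.mpr (rank_lt_card' B c hj)
  · rw [Finset.card_range, Finset.card_image_of_injOn (rank_injOn' B c)]

/-- The LF-images of the c-positions inside a BWT interval [s,e] form the contiguous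
interval [LF(s*), LF(e*)], where s* and e* are the first and last c-positions in [s,e]. -/
theorem stmt14 {n : ℕ} {α : Type*} [LinearOrder α] (B : Fin n → α) (c : α)
    (s e sStar eStar : Fin n) (hse : s ≤ e)
    (hs1 : s ≤ sStar ∧ sStar ≤ e ∧ B sStar = c)
    (hs2 : ∀ j : Fin n, s ≤ j → j ≤ e → B j = c → sStar ≤ j)
    (he1 : s ≤ eStar ∧ eStar ≤ e ∧ B eStar = c)
    (he2 : ∀ j : Fin n, s ≤ j → j ≤ e → B j = c → j ≤ eStar) :
    ∀ m : ℕ, (∃ j : Fin n, s ≤ j ∧ j ≤ e ∧ B j = c ∧ LF B j = m) ↔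
      (LF B sStar ≤ m ∧ m ≤ LF B eStar) := by
  obtain ⟨hss, hse1, hsc⟩ := hs1
  obtain ⟨hes, hee1, hec⟩ := he1
  intro m
  constructor
  · rintro ⟨j, hsj, hje, hjc, rfl⟩
    have h1 : sStar ≤ j := hs2 j hsj hje hjc
    have h2 : j ≤ eStar := he2 j hsj hje hjc
    unfold LF
    rw [hjc, hsc, hec]
    exact ⟨Nat.add_le_add_left (rank_mono' B c h1) _,
           Nat.add_le_add_left (rank_mono' B c h2) _⟩
  · rintro ⟨h1, h2⟩
    unfold LF at h1 h2
    rw [hsc] at h1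
    rw [hec] at h2
    have hCm : Ccount B c ≤ m := le_trans (Nat.le_add_right _ _) h1
    set k := m - Ccount B c with hk
    have hks : rank B c sStar ≤ k := by omega
    have hke : k ≤ rank B c eStar := by omega
    have hkcard : k < (Finset.univ.filter (fun j => B j = c)).card :=
      lt_of_le_of_lt hke (rank_lt_card' B c hec)
    have : k ∈ (Finset.univ.filter (fun j => B j = c)).image (rank B c) := by
      rw [rank_image']; exact Finset.mem_range.mpr hkcard
    simp only [Finset.mem_image, Finset.mem_filter, Finset.mem_univ, true_and] at this
    obtain ⟨j, hjc, hjr⟩ := this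
    have hsj : sStar ≤ j := by
      by_contra h
      push_neg at h
      exact absurd hjr (Nat.ne_of_lt (lt_of_lt_of_le (rank_strict' B c h hjc) hks))
    have hje : j ≤ eStar := by
      by_contra h
      push_neg at h
      exact absurd hjr.symm (Nat.ne_of_lt (lt_of_le_of_lt hke (rank_strict' B c h hec)))
    refine ⟨j, le_trans hss hsj, le_trans hje hee1, hjc, ?_⟩
    unfold LF
    rw [hjc, hjr]
    omega
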